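/- Let a = diag(e^{1/2}, e^{-1/2}) ∈ SL_2(ℝ) and let H = {u(t) = [[1,t],[0,1]] : t ∈ ℝ} be its expanding horospherical subgroup. For the standard representation on ℝ², for every 0 < δ < 1 there exists c < 1 and R_0 such that for all R ≥ R_0 and every nonzero v ∈ ℝ², ∫_0^1 ‖a_{log R} u(t) v‖^{-δ} dt ≤ c · ‖v‖^{-δ}, where a_s = diag(e^{s/2}, e^{-s/2}). -/

import Mathlib

open intervalIntegral MeasureTheory Set

section helpers

variable {δ : ℝ}

private lemma absRpowInt (hδ1 : δ < 1) (a b : ℝ) :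
    IntervalIntegrable (fun s : ℝ => |s| ^ (-δ)) volume a b := by
  have key : ∀ b : ℝ, 0 ≤ b → IntervalIntegrable (fun s : ℝ => |s| ^ (-δ)) volume 0 b := by
    intro b hb
    have h1 : IntervalIntegrable (fun s : ℝ => s ^ (-δ)) volume 0 b :=
      intervalIntegral.intervalIntegrable_rpow' (by linarith)
    rw [intervalIntegrable_iff] at h1 ⊢
    refine h1.congr_fun ?_ measurableSet_uIoc
    intro x hx
    rw [Set.uIoc_of_le hb] at hx
    simp [abs_of_nonneg hx.1.le]
  have key2 : ∀ b : ℝ, IntervalIntegrable (fun s : ℝ => |s| ^ (-δ)) volume 0 b := by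
    intro b
    rcases le_or_gt 0 b with hb | hb
    · exact key b hb
    · have h2 := key (-b) (by linarith)
      have h3 := (IntervalIntegrable.iff_comp_neg (by simp)).mp h2
      simp only [neg_zero, neg_neg, abs_neg] at h3
      exact h3
  exact (key2 a).symm.trans (key2 b)

private lemma L0 (hδ0 : 0 < δ) (hδ1 : δ < 1) {B : ℝ} (hB0 : 0 ≤ B) (hB2 : B ≤ 2) :
    (∫ s in (0:ℝ)..B, |s| ^ (-δ)) ≤ 2 / (1 - δ) := by
  have h1δ : 0 < 1 - δ := by linarith
  have heq : (∫ s in (0:ℝ)..B, |s| ^ (-δ)) = ∫ s in (0:ℝ)..B, s ^ (-δ) := by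
    apply intervalIntegral.integral_congr
    intro x hx
    rw [Set.uIcc_of_le hB0] at hx
    simp [abs_of_nonneg hx.1]
  rw [heq, integral_rpow (Or.inl (by linarith))]
  have h0 : (0:ℝ) ^ (-δ + 1) = 0 := Real.zero_rpow (by linarith)
  rw [h0, sub_zero]
  have h1 : B ^ (-δ + 1) ≤ 2 := by
    calc B ^ (-δ + 1) ≤ 2 ^ (-δ + 1) := Real.rpow_le_rpow hB0 hB2 (by linarith)
    _ ≤ 2 ^ (1:ℝ) := Real.rpow_le_rpow_of_exponent_le one_le_two (by linarith)
    _ = 2 := Real.rpow_one 2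
  rw [show -δ + 1 = 1 - δ by ring] at h1 ⊢
  rw [div_le_div_iff₀ h1δ h1δ]
  nlinarith

private lemma L1 (hδ0 : 0 < δ) (hδ1 : δ < 1) {A : ℝ} (hA : 0 ≤ A) :
    (∫ s in A..(A+1), |s| ^ (-δ)) ≤ 2 / (1 - δ) := by
  have h1δ : 0 < 1 - δ := by linarith
  rcases le_or_gt A 1 with hA1 | hA1
  · have hmono : (∫ s in A..(A+1), |s| ^ (-δ)) ≤ ∫ s in (0:ℝ)..2, |s| ^ (-δ) :=
      intervalIntegral.integral_mono_interval hA (by linarith) (by linarith)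
        (Filter.Eventually.of_forall fun x => Real.rpow_nonneg (abs_nonneg x) _)
        (absRpowInt hδ1 0 2)
    exact hmono.trans (L0 hδ0 hδ1 (by norm_num) (by norm_num))
  · have hle : (∫ s in A..(A+1), |s| ^ (-δ)) ≤ ∫ _ in A..(A+1), (1:ℝ) := by
      apply intervalIntegral.integral_mono_on (by linarith) (absRpowInt hδ1 _ _)
        intervalIntegrable_const
      intro x hx
      have hx1 : 1 ≤ x := le_trans hA1.le hx.1
      rw [abs_of_nonneg (by linarith)]
      exact Real.rpow_le_one_of_one_le_of_nonpos hx1 (by linarith)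
    simp only [intervalIntegral.integral_const, smul_eq_mul, mul_one, add_sub_cancel_left] at hle
    have h2 : (1:ℝ) ≤ 2 / (1 - δ) := by
      rw [le_div_iff₀ h1δ]; linarith
    linarith
end helpers

section helpers2
variable {δ : ℝ}

private lemma Lmain (hδ0 : 0 < δ) (hδ1 : δ < 1) (A : ℝ) :
    (∫ s in A..(A+1), |s| ^ (-δ)) ≤ 4 / (1 - δ) := by
  have h1δ : 0 < 1 - δ := by linarith
  have hdd : (2:ℝ) / (1 - δ) ≤ 4 / (1 - δ) := by
    rw [div_le_div_iff₀ h1δ h1δ]; nlinarith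
  rcases le_or_gt 0 A with hA | hA
  · exact (L1 hδ0 hδ1 hA).trans hdd
  rcases le_or_gt (A + 1) 0 with hA1 | hA1
  · have h := intervalIntegral.integral_comp_neg (a := -(A+1)) (b := -A) (fun s : ℝ => |s| ^ (-δ))
    simp only [abs_neg, neg_neg] at h
    rw [← h]
    have h2 := L1 hδ0 hδ1 (A := -(A+1)) (by linarith)
    rw [show -(A+1) + 1 = -A by ring] at h2
    exact h2.trans hdd
  · have hsplit : (∫ s in A..(0:ℝ), |s| ^ (-δ)) + (∫ s in (0:ℝ)..(A+1), |s| ^ (-δ))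
        = ∫ s in A..(A+1), |s| ^ (-δ) :=
      intervalIntegral.integral_add_adjacent_intervals (absRpowInt hδ1 _ _) (absRpowInt hδ1 _ _)
    rw [← hsplit]
    have hpart1 : (∫ s in A..(0:ℝ), |s| ^ (-δ)) ≤ 2 / (1 - δ) := by
      have h := intervalIntegral.integral_comp_neg (a := (0:ℝ)) (b := -A) (fun s : ℝ => |s| ^ (-δ))
      simp only [abs_neg, neg_neg, neg_zero] at h
      rw [← h]
      exact L0 hδ0 hδ1 (by linarith) (by linarith)
    have hpart2 : (∫ s in (0:ℝ)..(A+1), |s| ^ (-δ)) ≤ 2 / (1 - δ) :=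
      L0 hδ0 hδ1 (by linarith) (by linarith)
    have h4 : (4:ℝ) / (1 - δ) = 2 / (1 - δ) + 2 / (1 - δ) := by ring
    linarith

private lemma Lshift (hδ0 : 0 < δ) (hδ1 : δ < 1) (a b : ℝ) (hb : b ≠ 0) :
    (∫ t in (0:ℝ)..1, |a + t * b| ^ (-δ)) ≤ |b| ^ (-δ) * (4 / (1 - δ)) := by
  have heq : ∀ t : ℝ, |a + t * b| ^ (-δ) = |b| ^ (-δ) * |t + a/b| ^ (-δ) := by
    intro t
    have h1 : a + t * b = b * (t + a/b) := by field_simp; ring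
    rw [h1, abs_mul, Real.mul_rpow (abs_nonneg _) (abs_nonneg _)]
  simp_rw [heq]
  rw [intervalIntegral.integral_const_mul]
  have h2 : (∫ t in (0:ℝ)..1, |t + a/b| ^ (-δ)) ≤ 4 / (1 - δ) := by
    rw [intervalIntegral.integral_comp_add_right (fun s => |s| ^ (-δ)) (a/b), zero_add]
    have h := Lmain hδ0 hδ1 (a/b)
    rw [show a/b + 1 = 1 + a/b by ring] at h
    exact h
  exact mul_le_mul_of_nonneg_left h2 (Real.rpow_nonneg (abs_nonneg b) _)

private lemma rpow_neg_le3 (hδ0 : 0 < δ) (hδ1 : δ < 1) {w x m : ℝ} (hw : 0 < w) (hm1 : 1 ≤ m)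
    (hm3 : m ≤ 3) (h : w ≤ m * x) : x ^ (-δ) ≤ 3 * w ^ (-δ) := by
  have hm0 : 0 < m := by linarith
  have hx : 0 < x := by nlinarith
  have h1 : w / m ≤ x := (div_le_iff₀ hm0).mpr (by nlinarith)
  have h2 : x ^ (-δ) ≤ (w / m) ^ (-δ) :=
    Real.rpow_le_rpow_of_nonpos (by positivity) h1 (by linarith)
  have h3 : (w / m) ^ (-δ) = w ^ (-δ) * m ^ δ := by
    rw [Real.div_rpow hw.le hm0.le, Real.rpow_neg hm0.le δ]
    field_simp
  have h4 : m ^ δ ≤ 3 := by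
    calc m ^ δ ≤ m ^ (1:ℝ) := Real.rpow_le_rpow_of_exponent_le hm1 (by linarith)
    _ = m := Real.rpow_one m
    _ ≤ 3 := hm3
  have h5 : 0 ≤ w ^ (-δ) := Real.rpow_nonneg hw.le _
  nlinarith [h2, h3, h4, h5]

end helpers2

set_option maxHeartbeats 1600000 in
/-- Margulis-inequality integral estimate for the standard representation of SL₂(ℝ):
for every `0 < δ < 1` there are `c < 1` and `R₀` such that for `R ≥ R₀` and every
nonzero `v ∈ ℝ²`,
`∫₀¹ ‖a_{log R} u(t) v‖^{-δ} dt ≤ c ‖v‖^{-δ}`, where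
`a_{log R} u(t) v = (√R (v₁ + t v₂), v₂/√R)`. -/
theorem margulis_integral_estimate_SL2 (δ : ℝ) (hδ0 : 0 < δ) (hδ1 : δ < 1) :
    ∃ c : ℝ, c < 1 ∧ ∃ R₀ : ℝ, 0 < R₀ ∧ ∀ R : ℝ, R₀ ≤ R →
      ∀ v : ℝ × ℝ, v ≠ 0 →
        (∫ t in (0:ℝ)..1,
            (Real.sqrt ((Real.sqrt R * (v.1 + t * v.2)) ^ 2 +
              (v.2 / Real.sqrt R) ^ 2)) ^ (-δ)) ≤
          c * (Real.sqrt (v.1 ^ 2 + v.2 ^ 2)) ^ (-δ) := by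
  have h1δ : 0 < 1 - δ := by linarith
  set K : ℝ := 24 / (1 - δ) with hK
  have hK0 : 0 < K := by positivity
  refine ⟨1/2, by norm_num, max 1 (K ^ (2/δ)), lt_of_lt_of_le one_pos (le_max_left _ _), ?_⟩
  intro R hR v hv
  have hR1 : (1:ℝ) ≤ R := le_trans (le_max_left _ _) hR
  set r := Real.sqrt R with hrdef
  have hr1 : 1 ≤ r := by
    rw [hrdef, show (1:ℝ) = Real.sqrt 1 by rw [Real.sqrt_one]]
    exact Real.sqrt_le_sqrt hR1
  have hr0 : 0 < r := by linarith
  -- r^δ ≥ K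
  have hrK : K ≤ r ^ δ := by
    have h1 : K ^ (2/δ) ≤ R := le_trans (le_max_right _ _) hR
    have h2 : (K ^ (2/δ)) ^ (δ/2) ≤ R ^ (δ/2) :=
      Real.rpow_le_rpow (Real.rpow_nonneg hK0.le _) h1 (by positivity)
    rw [← Real.rpow_mul hK0.le, show 2/δ * (δ/2) = 1 by field_simp, Real.rpow_one] at h2
    have h3 : r ^ δ = R ^ (δ/2) := by
      rw [hrdef, Real.sqrt_eq_rpow, ← Real.rpow_mul (by linarith), one_div]
      rw [show 2⁻¹ * δ = δ/2 by ring]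
    rw [h3]; exact h2
  have hrmain : r ^ (-δ) * (12 / (1 - δ)) ≤ 1/2 := by
    have hrδpos : 0 < r ^ δ := Real.rpow_pos_of_pos hr0 δ
    rw [Real.rpow_neg hr0.le, inv_mul_le_iff₀ hrδpos]
    have : 12 / (1 - δ) = K / 2 := by rw [hK]; ring
    rw [this]
    linarith
  have hrneg_nonneg : 0 ≤ r ^ (-δ) := Real.rpow_nonneg hr0.le _
  -- norm of v
  have h12 : ¬(v.1 = 0 ∧ v.2 = 0) := fun h => hv (Prod.ext h.1 h.2)
  have hv2 : 0 < v.1 ^ 2 + v.2 ^ 2 := by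
    rcases not_and_or.mp h12 with h | h
    · have : 0 < v.1 ^ 2 := lt_of_le_of_ne (sq_nonneg _) (Ne.symm (pow_ne_zero 2 h))
      nlinarith [sq_nonneg v.2]
    · have : 0 < v.2 ^ 2 := lt_of_le_of_ne (sq_nonneg _) (Ne.symm (pow_ne_zero 2 h))
      nlinarith [sq_nonneg v.1]
  set N : ℝ := Real.sqrt (v.1 ^ 2 + v.2 ^ 2) with hNdef
  have hN : 0 < N := Real.sqrt_pos.mpr hv2
  have hNneg_nonneg : 0 ≤ N ^ (-δ) := Real.rpow_nonneg hN.le _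
  -- lower bound for the base by the first coordinate
  have hbase : ∀ t : ℝ, r * |v.1 + t * v.2| ≤
      Real.sqrt ((r * (v.1 + t * v.2)) ^ 2 + (v.2 / r) ^ 2) := by
    intro t
    have h1 : Real.sqrt ((r * (v.1 + t * v.2)) ^ 2) ≤
        Real.sqrt ((r * (v.1 + t * v.2)) ^ 2 + (v.2 / r) ^ 2) :=
      Real.sqrt_le_sqrt (by nlinarith [sq_nonneg (v.2 / r)])
    rw [Real.sqrt_sq_eq_abs, abs_mul, abs_of_pos hr0] at h1
    exact h1
  rcases le_or_gt |v.1| (2 * |v.2|) with hcase | hcase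
  · -- case |v₁| ≤ 2|v₂| : use the 1D integral estimate
    have hb : v.2 ≠ 0 := by
      intro h
      rw [h] at hcase
      simp only [abs_zero, mul_zero] at hcase
      exact h12 ⟨abs_nonpos_iff.mp hcase, h⟩
    have hb' : 0 < |v.2| := abs_pos.mpr hb
    -- continuity / integrability of the integrand
    have hbase_pos : ∀ t : ℝ, 0 < Real.sqrt ((r * (v.1 + t * v.2)) ^ 2 + (v.2 / r) ^ 2) := by
      intro t
      apply Real.sqrt_pos.mpr
      have h2 : 0 < (v.2 / r) ^ 2 :=
        lt_of_le_of_ne (sq_nonneg _) (Ne.symm (pow_ne_zero 2 (div_ne_zero hb hr0.ne')))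
      nlinarith [sq_nonneg (r * (v.1 + t * v.2))]
    have hc1 : Continuous (fun t : ℝ => Real.sqrt ((r * (v.1 + t * v.2)) ^ 2 + (v.2 / r) ^ 2)) := by
      fun_prop
    have hFcont : Continuous (fun t : ℝ =>
        (Real.sqrt ((r * (v.1 + t * v.2)) ^ 2 + (v.2 / r) ^ 2)) ^ (-δ)) :=
      hc1.rpow_const fun t => Or.inl (hbase_pos t).ne'
    have hFint : IntervalIntegrable _ volume 0 1 := hFcont.intervalIntegrable 0 1
    -- integrability of the comparison function
    have hgin : IntervalIntegrable (fun t : ℝ => |v.1 + t * v.2| ^ (-δ)) volume 0 1 := by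
      have h1 := (absRpowInt hδ1 v.1 (v.1 + v.2)).comp_add_right v.1
      simp only [sub_self, add_sub_cancel_left] at h1
      have h2 := h1.comp_mul_right (c := v.2)
      simp only [zero_div, div_self hb] at h2
      have h3 : (fun x : ℝ => |x * v.2 + v.1| ^ (-δ)) = fun x : ℝ => |v.1 + x * v.2| ^ (-δ) := by
        funext x; rw [add_comm]
      rwa [h3] at h2
    have hgint : IntervalIntegrable (fun t : ℝ => r ^ (-δ) * |v.1 + t * v.2| ^ (-δ)) volume 0 1 :=
      hgin.const_mul _
    -- a.e. pointwise bound
    have hnull : volume {t : ℝ | v.1 + t * v.2 = 0} = 0 := by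
      refine measure_mono_null (fun t ht => ?_) (measure_singleton (-v.1/v.2))
      simp only [Set.mem_setOf_eq] at ht
      simp only [Set.mem_singleton_iff]
      field_simp
      linarith
    have hae : (fun t : ℝ =>
        (Real.sqrt ((r * (v.1 + t * v.2)) ^ 2 + (v.2 / r) ^ 2)) ^ (-δ)) ≤ᵐ[volume]
        fun t : ℝ => r ^ (-δ) * |v.1 + t * v.2| ^ (-δ) := by
      have h1 : ∀ᵐ t : ℝ, v.1 + t * v.2 ≠ 0 := by
        rw [MeasureTheory.ae_iff]
        simpa using hnull
      filter_upwards [h1] with t ht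
      have hx : 0 < |v.1 + t * v.2| := abs_pos.mpr ht
      calc (Real.sqrt ((r * (v.1 + t * v.2)) ^ 2 + (v.2 / r) ^ 2)) ^ (-δ)
          ≤ (r * |v.1 + t * v.2|) ^ (-δ) :=
            Real.rpow_le_rpow_of_nonpos (by positivity) (hbase t) (by linarith)
        _ = r ^ (-δ) * |v.1 + t * v.2| ^ (-δ) := Real.mul_rpow hr0.le (abs_nonneg _)
    have hN3 : N ≤ 3 * |v.2| := by
      rw [hNdef]
      have hsq : |v.1| * |v.1| ≤ (2 * |v.2|) * (2 * |v.2|) :=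
        mul_self_le_mul_self (abs_nonneg v.1) hcase
      have h1 : v.1 ^ 2 + v.2 ^ 2 ≤ (3 * |v.2|) ^ 2 := by
        nlinarith [sq_abs v.1, sq_abs v.2, hsq]
      calc Real.sqrt (v.1 ^ 2 + v.2 ^ 2) ≤ Real.sqrt ((3 * |v.2|) ^ 2) := Real.sqrt_le_sqrt h1
      _ = 3 * |v.2| := Real.sqrt_sq (by positivity)
    have hv2N : |v.2| ^ (-δ) ≤ 3 * N ^ (-δ) :=
      rpow_neg_le3 hδ0 hδ1 hN (by norm_num) (le_refl 3) hN3
    calc (∫ t in (0:ℝ)..1,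
            (Real.sqrt ((r * (v.1 + t * v.2)) ^ 2 + (v.2 / r) ^ 2)) ^ (-δ))
        ≤ ∫ t in (0:ℝ)..1, r ^ (-δ) * |v.1 + t * v.2| ^ (-δ) :=
          intervalIntegral.integral_mono_ae (by norm_num) hFint hgint hae
      _ = r ^ (-δ) * ∫ t in (0:ℝ)..1, |v.1 + t * v.2| ^ (-δ) :=
          intervalIntegral.integral_const_mul _ _
      _ ≤ r ^ (-δ) * (|v.2| ^ (-δ) * (4 / (1 - δ))) :=
          mul_le_mul_of_nonneg_left (Lshift hδ0 hδ1 v.1 v.2 hb) hrneg_nonneg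
      _ ≤ r ^ (-δ) * ((3 * N ^ (-δ)) * (4 / (1 - δ))) := by
          apply mul_le_mul_of_nonneg_left _ hrneg_nonneg
          exact mul_le_mul_of_nonneg_right hv2N (by positivity)
      _ = (r ^ (-δ) * (12 / (1 - δ))) * N ^ (-δ) := by ring
      _ ≤ (1/2) * N ^ (-δ) := mul_le_mul_of_nonneg_right hrmain hNneg_nonneg
  · -- case |v₁| > 2|v₂| : pointwise bound
    have hv1 : 0 < |v.1| := by
      have := abs_nonneg v.2; linarith
    have hlow : ∀ t ∈ Set.Icc (0:ℝ) 1, |v.1| / 2 ≤ |v.1 + t * v.2| := by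
      intro t ht
      have h := abs_add_le (v.1 + t * v.2) (-(t * v.2))
      rw [abs_neg, show v.1 + t * v.2 + -(t * v.2) = v.1 by ring] at h
      rw [abs_mul, abs_of_nonneg ht.1] at h
      have h2 : t * |v.2| ≤ |v.2| := mul_le_of_le_one_left (abs_nonneg v.2) ht.2
      linarith
    have hbase_pos : ∀ t ∈ Set.Icc (0:ℝ) 1,
        0 < Real.sqrt ((r * (v.1 + t * v.2)) ^ 2 + (v.2 / r) ^ 2) := by
      intro t ht
      have h1 := hbase t
      have h2 : r * (|v.1| / 2) ≤ r * |v.1 + t * v.2| :=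
        mul_le_mul_of_nonneg_left (hlow t ht) hr0.le
      have h3 : 0 < r * (|v.1| / 2) := by positivity
      linarith
    have hc1 : Continuous (fun t : ℝ => Real.sqrt ((r * (v.1 + t * v.2)) ^ 2 + (v.2 / r) ^ 2)) := by
      fun_prop
    have hFcont : ContinuousOn (fun t : ℝ =>
        (Real.sqrt ((r * (v.1 + t * v.2)) ^ 2 + (v.2 / r) ^ 2)) ^ (-δ)) (Set.uIcc (0:ℝ) 1) := by
      rw [Set.uIcc_of_le (by norm_num : (0:ℝ) ≤ 1)]
      exact ContinuousOn.rpow_const hc1.continuousOn fun t ht => Or.inl (hbase_pos t ht).ne'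
    have hFint : IntervalIntegrable _ volume 0 1 := hFcont.intervalIntegrable
    have hpt : ∀ t ∈ Set.Icc (0:ℝ) 1,
        (Real.sqrt ((r * (v.1 + t * v.2)) ^ 2 + (v.2 / r) ^ 2)) ^ (-δ)
          ≤ (r * (|v.1| / 2)) ^ (-δ) := by
      intro t ht
      apply Real.rpow_le_rpow_of_nonpos (by positivity) _ (by linarith)
      calc r * (|v.1| / 2) ≤ r * |v.1 + t * v.2| :=
            mul_le_mul_of_nonneg_left (hlow t ht) hr0.le
        _ ≤ _ := hbase t
    have hmono := intervalIntegral.integral_mono_on (μ := volume) (by norm_num : (0:ℝ) ≤ 1)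
      hFint intervalIntegrable_const hpt
    simp only [intervalIntegral.integral_const, smul_eq_mul, sub_zero, one_mul] at hmono
    have hN3 : N ≤ 3 * (|v.1| / 2) := by
      rw [hNdef]
      have hsq : (2 * |v.2|) * (2 * |v.2|) ≤ |v.1| * |v.1| :=
        mul_self_le_mul_self (by positivity) hcase.le
      have h1 : v.1 ^ 2 + v.2 ^ 2 ≤ (3 * (|v.1| / 2)) ^ 2 := by
        nlinarith [sq_abs v.1, sq_abs v.2, hsq]
      calc Real.sqrt (v.1 ^ 2 + v.2 ^ 2) ≤ Real.sqrt ((3 * (|v.1| / 2)) ^ 2) :=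
            Real.sqrt_le_sqrt h1
      _ = 3 * (|v.1| / 2) := Real.sqrt_sq (by positivity)
    have hv1N : (|v.1| / 2) ^ (-δ) ≤ 3 * N ^ (-δ) :=
      rpow_neg_le3 hδ0 hδ1 hN (by norm_num) (le_refl 3) hN3
    have h3K : r ^ (-δ) * 3 ≤ 1/2 := by
      have h12 : (3:ℝ) ≤ 12 / (1 - δ) := by
        rw [le_div_iff₀ h1δ]; nlinarith
      have := mul_le_mul_of_nonneg_left h12 hrneg_nonneg
      linarith
    calc (∫ t in (0:ℝ)..1,
            (Real.sqrt ((r * (v.1 + t * v.2)) ^ 2 + (v.2 / r) ^ 2)) ^ (-δ))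
        ≤ (r * (|v.1| / 2)) ^ (-δ) := hmono
      _ = r ^ (-δ) * (|v.1| / 2) ^ (-δ) := Real.mul_rpow hr0.le (by positivity)
      _ ≤ r ^ (-δ) * (3 * N ^ (-δ)) := mul_le_mul_of_nonneg_left hv1N hrneg_nonneg
      _ = (r ^ (-δ) * 3) * N ^ (-δ) := by ring
      _ ≤ (1/2) * N ^ (-δ) := mul_le_mul_of_nonneg_right h3K hNneg_nonneg
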